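/- Define φ(x,y) = (x² − y²) sin(ln(−ln(x² + y²))) for 0 < x² + y² ≤ 1/4 and φ(0,0) = 0. Then the Laplacian Δφ extends continuously to the origin and the Hessian of φ is bounded on the punctured disk {0 < x² + y² ≤ 1/4}, but φ is not twice differentiable at the origin. -/

import Mathlib

open Filter Topology Metric Set

noncomputable def pd {n : ℕ} (i : Fin n) (f : EuclideanSpace ℝ (Fin n) → ℝ)
    (x : EuclideanSpace ℝ (Fin n)) : ℝ :=
  fderiv ℝ f x (EuclideanSpace.single i 1)

noncomputable def spd {n : ℕ} (i j : Fin n) (f : EuclideanSpace ℝ (Fin n) → ℝ)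
    (x : EuclideanSpace ℝ (Fin n)) : ℝ :=
  pd i (pd j f) x

noncomputable def lap {n : ℕ} (f : EuclideanSpace ℝ (Fin n) → ℝ)
    (x : EuclideanSpace ℝ (Fin n)) : ℝ :=
  ∑ i, spd i i f x

def TwiceDiffAt {n : ℕ} (f : EuclideanSpace ℝ (Fin n) → ℝ)
    (p : EuclideanSpace ℝ (Fin n)) : Prop :=
  (∀ᶠ x in 𝓝 p, DifferentiableAt ℝ f x) ∧
  DifferentiableAt ℝ (fderiv ℝ f) p ∧
  Tendsto (fun x => (f x - f p - fderiv ℝ f p (x - p)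
      - (1/2) * fderiv ℝ (fderiv ℝ f) p (x - p) (x - p)) / ‖x - p‖^2)
    (𝓝[≠] p) (𝓝 0)

open scoped Classical in
noncomputable def phiFun (x : EuclideanSpace ℝ (Fin 2)) : ℝ :=
  if x = 0 then 0
  else ((x 0)^2 - (x 1)^2) * Real.sin (Real.log (-Real.log ((x 0)^2 + (x 1)^2)))

/- ## Auxiliary definitions -/

abbrev E2 := EuclideanSpace ℝ (Fin 2)
noncomputable def pj (i : Fin 2) : E2 →L[ℝ] ℝ := EuclideanSpace.proj i
noncomputable def sF (x : E2) : ℝ := x 0 * x 0 + x 1 * x 1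
noncomputable def uF (x : E2) : ℝ := x 0 * x 0 - x 1 * x 1
noncomputable def tF (x : E2) : ℝ := -Real.log (sF x)
noncomputable def wF (x : E2) : ℝ := Real.log (tF x)
noncomputable def GF (x : E2) : ℝ := Real.sin (wF x)
noncomputable def CF (x : E2) : ℝ := Real.cos (wF x)
noncomputable def RF (x : E2) : ℝ := CF x * (sF x * tF x)⁻¹
noncomputable def KF (x : E2) : ℝ :=
  (GF x - CF x * (tF x - 1)) * (sF x * tF x * (sF x * tF x))⁻¹
noncomputable def P0 (x : E2) : ℝ := 2 * x 0 * GF x - 2 * x 0 * (uF x * RF x)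
noncomputable def P1 (x : E2) : ℝ := -(2 * x 1 * GF x) - 2 * x 1 * (uF x * RF x)
noncomputable def S00 (x : E2) : ℝ :=
  2 * GF x - 8 * (x 0 * x 0) * RF x - 2 * (uF x * RF x) - 4 * (x 0 * x 0) * (uF x * KF x)
noncomputable def SX (x : E2) : ℝ := -(4 * (x 0 * x 1) * (uF x * KF x))
noncomputable def S11 (x : E2) : ℝ :=
  -(2 * GF x) - 2 * (uF x * RF x) + 8 * (x 1 * x 1) * RF x - 4 * (x 1 * x 1) * (uF x * KF x)

lemma phiFun_eq : phiFun = fun x => uF x * GF x := by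
  funext x
  by_cases hx : x = 0
  · subst hx; simp [phiFun, uF]
  · simp only [phiFun, if_neg hx, uF, GF, wF, tF, sF]
    ring_nf

lemma sF_pos {x : E2} (hx : x ≠ 0) : 0 < sF x := by
  have h0 : 0 ≤ sF x := by
    simp only [sF]
    nlinarith [mul_self_nonneg (x 0), mul_self_nonneg (x 1)]
  rcases h0.lt_or_eq with h | h
  · exact h
  · exfalso; apply hx
    simp only [sF] at h
    have h0 : x 0 = 0 ∧ x 1 = 0 := by
      constructor <;> nlinarith [mul_self_nonneg (x 0), mul_self_nonneg (x 1)]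
    ext i
    fin_cases i <;> simp [h0.1, h0.2]

lemma tF_pos {x : E2} (hx : x ≠ 0) (h1 : sF x < 1) : 0 < tF x := by
  have := sF_pos hx
  simp only [tF, neg_pos]
  exact Real.log_neg this h1

lemma cont_apply (i : Fin 2) : Continuous (fun y : E2 => y i) := (pj i).continuous

lemma sF_cont : Continuous sF := by
  unfold sF
  exact ((cont_apply 0).mul (cont_apply 0)).add ((cont_apply 1).mul (cont_apply 1))

lemma V_open : IsOpen {y : E2 | y ≠ 0 ∧ sF y < 1} :=
  (isOpen_compl_singleton).inter (isOpen_lt sF_cont continuous_const)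

/- ## First derivatives -/

section tower
variable {x : E2} (hx : x ≠ 0) (h1 : sF x < 1)
include hx h1

set_option linter.unusedSectionVars false

lemma hsF : HasFDerivAt sF (x 0 • pj 0 + x 0 • pj 0 + (x 1 • pj 1 + x 1 • pj 1)) x :=
  (((pj 0).hasFDerivAt.mul (pj 0).hasFDerivAt).add ((pj 1).hasFDerivAt.mul (pj 1).hasFDerivAt))

lemma huF : HasFDerivAt uF (x 0 • pj 0 + x 0 • pj 0 - (x 1 • pj 1 + x 1 • pj 1)) x :=
  (((pj 0).hasFDerivAt.mul (pj 0).hasFDerivAt).sub ((pj 1).hasFDerivAt.mul (pj 1).hasFDerivAt))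

lemma htF : HasFDerivAt tF
    (-((sF x)⁻¹ • (x 0 • pj 0 + x 0 • pj 0 + (x 1 • pj 1 + x 1 • pj 1)))) x :=
  ((Real.hasDerivAt_log (sF_pos hx).ne').comp_hasFDerivAt x (hsF hx h1)).neg

lemma hwF : HasFDerivAt wF
    ((tF x)⁻¹ • (-((sF x)⁻¹ • (x 0 • pj 0 + x 0 • pj 0 + (x 1 • pj 1 + x 1 • pj 1))))) x :=
  (Real.hasDerivAt_log (tF_pos hx h1).ne').comp_hasFDerivAt x (htF hx h1)

lemma hGF : HasFDerivAt GF (CF x •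
    ((tF x)⁻¹ • (-((sF x)⁻¹ • (x 0 • pj 0 + x 0 • pj 0 + (x 1 • pj 1 + x 1 • pj 1)))))) x :=
  (Real.hasDerivAt_sin (wF x)).comp_hasFDerivAt x (hwF hx h1)

lemma hCF : HasFDerivAt CF ((-GF x) •
    ((tF x)⁻¹ • (-((sF x)⁻¹ • (x 0 • pj 0 + x 0 • pj 0 + (x 1 • pj 1 + x 1 • pj 1)))))) x := by
  have := (Real.hasDerivAt_cos (wF x)).comp_hasFDerivAt x (hwF hx h1)
  exact this

lemma hST : HasFDerivAt (fun y => sF y * tF y)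
    (sF x • (-((sF x)⁻¹ • (x 0 • pj 0 + x 0 • pj 0 + (x 1 • pj 1 + x 1 • pj 1))))
      + tF x • (x 0 • pj 0 + x 0 • pj 0 + (x 1 • pj 1 + x 1 • pj 1))) x :=
  (hsF hx h1).mul (htF hx h1)

lemma hINV : HasFDerivAt (fun y => (sF y * tF y)⁻¹)
    ((-((sF x * tF x) ^ 2)⁻¹) •
      (sF x • (-((sF x)⁻¹ • (x 0 • pj 0 + x 0 • pj 0 + (x 1 • pj 1 + x 1 • pj 1))))
        + tF x • (x 0 • pj 0 + x 0 • pj 0 + (x 1 • pj 1 + x 1 • pj 1)))) x := by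
  have hne : sF x * tF x ≠ 0 := by
    have := sF_pos hx; have := tF_pos hx h1; positivity
  exact (hasDerivAt_inv hne).comp_hasFDerivAt x (hST hx h1)

lemma hRF : HasFDerivAt RF
    (CF x • ((-((sF x * tF x) ^ 2)⁻¹) •
      (sF x • (-((sF x)⁻¹ • (x 0 • pj 0 + x 0 • pj 0 + (x 1 • pj 1 + x 1 • pj 1))))
        + tF x • (x 0 • pj 0 + x 0 • pj 0 + (x 1 • pj 1 + x 1 • pj 1))))
     + (sF x * tF x)⁻¹ • ((-GF x) •
    ((tF x)⁻¹ • (-((sF x)⁻¹ • (x 0 • pj 0 + x 0 • pj 0 + (x 1 • pj 1 + x 1 • pj 1))))))) x :=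
  (hCF hx h1).mul (hINV hx h1)

lemma pd0_eq : pd 0 phiFun x = P0 x := by
  have hD := (huF hx h1).mul (hGF hx h1)
  unfold pd
  rw [phiFun_eq, show (fun x => uF x * GF x) = uF * GF from rfl, hD.fderiv]
  simp only [ContinuousLinearMap.add_apply, ContinuousLinearMap.smul_apply,
    ContinuousLinearMap.sub_apply, ContinuousLinearMap.neg_apply, smul_eq_mul, pj,
    PiLp.proj_apply, EuclideanSpace.single_apply]
  norm_num [P0, RF]
  field_simp
  ring

lemma pd1_eq : pd 1 phiFun x = P1 x := by
  have hD := (huF hx h1).mul (hGF hx h1)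
  unfold pd
  rw [phiFun_eq, show (fun x => uF x * GF x) = uF * GF from rfl, hD.fderiv]
  simp only [ContinuousLinearMap.add_apply, ContinuousLinearMap.smul_apply,
    ContinuousLinearMap.sub_apply, ContinuousLinearMap.neg_apply, smul_eq_mul, pj,
    PiLp.proj_apply, EuclideanSpace.single_apply]
  norm_num [P1, RF]
  field_simp
  ring

lemma pd0_eventuallyEq : pd 0 phiFun =ᶠ[𝓝 x] P0 :=
  Filter.eventually_of_mem (V_open.mem_nhds ⟨hx, h1⟩) (fun y hy => pd0_eq hy.1 hy.2)

lemma pd1_eventuallyEq : pd 1 phiFun =ᶠ[𝓝 x] P1 :=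
  Filter.eventually_of_mem (V_open.mem_nhds ⟨hx, h1⟩) (fun y hy => pd1_eq hy.1 hy.2)

lemma spd_j0 (i : Fin 2) : spd i 0 phiFun x = fderiv ℝ P0 x (EuclideanSpace.single i 1) := by
  show fderiv ℝ (pd 0 phiFun) x _ = _
  rw [(pd0_eventuallyEq hx h1).fderiv_eq]

lemma spd_j1 (i : Fin 2) : spd i 1 phiFun x = fderiv ℝ P1 x (EuclideanSpace.single i 1) := by
  show fderiv ℝ (pd 1 phiFun) x _ = _
  rw [(pd1_eventuallyEq hx h1).fderiv_eq]

lemma spd00_eq : spd 0 0 phiFun x = S00 x := by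
  have hs0 : sF x ≠ 0 := (sF_pos hx).ne'
  have ht0 : tF x ≠ 0 := (tF_pos hx h1).ne'
  have hD := ((((pj 0).hasFDerivAt.const_mul (2:ℝ)).mul (hGF hx h1)).sub
      ((((pj 0).hasFDerivAt.const_mul (2:ℝ))).mul ((huF hx h1).mul (hRF hx h1))))
  rw [spd_j0 hx h1, (show HasFDerivAt P0 _ x from hD).fderiv]
  simp only [ContinuousLinearMap.add_apply, ContinuousLinearMap.smul_apply,
    ContinuousLinearMap.sub_apply, ContinuousLinearMap.neg_apply, smul_eq_mul, pj,
    PiLp.proj_apply, EuclideanSpace.single_apply]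
  norm_num [S00, RF, KF, uF]
  field_simp
  ring

lemma spd10_eq : spd 1 0 phiFun x = SX x := by
  have hs0 : sF x ≠ 0 := (sF_pos hx).ne'
  have ht0 : tF x ≠ 0 := (tF_pos hx h1).ne'
  have hD := ((((pj 0).hasFDerivAt.const_mul (2:ℝ)).mul (hGF hx h1)).sub
      ((((pj 0).hasFDerivAt.const_mul (2:ℝ))).mul ((huF hx h1).mul (hRF hx h1))))
  rw [spd_j0 hx h1, (show HasFDerivAt P0 _ x from hD).fderiv]
  simp only [ContinuousLinearMap.add_apply, ContinuousLinearMap.smul_apply,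
    ContinuousLinearMap.sub_apply, ContinuousLinearMap.neg_apply, smul_eq_mul, pj,
    PiLp.proj_apply, EuclideanSpace.single_apply]
  norm_num [SX, RF, KF, uF]
  field_simp
  ring

lemma spd01_eq : spd 0 1 phiFun x = SX x := by
  have hs0 : sF x ≠ 0 := (sF_pos hx).ne'
  have ht0 : tF x ≠ 0 := (tF_pos hx h1).ne'
  have hD := (((((pj 1).hasFDerivAt.const_mul (2:ℝ)).mul (hGF hx h1)).neg).sub
      ((((pj 1).hasFDerivAt.const_mul (2:ℝ))).mul ((huF hx h1).mul (hRF hx h1))))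
  rw [spd_j1 hx h1, (show HasFDerivAt P1 _ x from hD).fderiv]
  simp only [ContinuousLinearMap.add_apply, ContinuousLinearMap.smul_apply,
    ContinuousLinearMap.sub_apply, ContinuousLinearMap.neg_apply, smul_eq_mul, pj,
    PiLp.proj_apply, EuclideanSpace.single_apply]
  norm_num [SX, RF, KF, uF]
  field_simp
  ring

lemma spd11_eq : spd 1 1 phiFun x = S11 x := by
  have hs0 : sF x ≠ 0 := (sF_pos hx).ne'
  have ht0 : tF x ≠ 0 := (tF_pos hx h1).ne'
  have hD := (((((pj 1).hasFDerivAt.const_mul (2:ℝ)).mul (hGF hx h1)).neg).sub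
      ((((pj 1).hasFDerivAt.const_mul (2:ℝ))).mul ((huF hx h1).mul (hRF hx h1))))
  rw [spd_j1 hx h1, (show HasFDerivAt P1 _ x from hD).fderiv]
  simp only [ContinuousLinearMap.add_apply, ContinuousLinearMap.smul_apply,
    ContinuousLinearMap.sub_apply, ContinuousLinearMap.neg_apply, smul_eq_mul, pj,
    PiLp.proj_apply, EuclideanSpace.single_apply]
  norm_num [S11, RF, KF, uF]
  field_simp
  ring

end tower

/- ## Bounds -/

lemma abs_uF_le (x : E2) : |uF x| ≤ sF x := by
  simp only [uF, sF]
  rw [abs_le]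
  constructor <;> nlinarith [mul_self_nonneg (x 0), mul_self_nonneg (x 1)]

lemma exp_neg_one_lt_one : Real.exp (-1) < 1 := Real.exp_lt_one_iff.mpr (by norm_num)

lemma sF_lt_one {x : E2} (hse : sF x ≤ Real.exp (-1)) : sF x < 1 :=
  lt_of_le_of_lt hse exp_neg_one_lt_one

lemma one_le_tF {x : E2} (hx : x ≠ 0) (hse : sF x ≤ Real.exp (-1)) : 1 ≤ tF x := by
  have hs := sF_pos hx
  have : Real.log (sF x) ≤ -1 := by
    calc Real.log (sF x) ≤ Real.log (Real.exp (-1)) := Real.log_le_log hs hse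
      _ = -1 := Real.log_exp _
  simp only [tF]; linarith

lemma RF_bound {x : E2} (hx : x ≠ 0) (hse : sF x ≤ Real.exp (-1)) :
    |RF x| ≤ (sF x * tF x)⁻¹ := by
  have hs := sF_pos hx
  have ht : (0:ℝ) < tF x := lt_of_lt_of_le one_pos (one_le_tF hx hse)
  rw [RF, abs_mul, abs_inv, abs_of_pos (by positivity : (0:ℝ) < sF x * tF x)]
  calc |CF x| * (sF x * tF x)⁻¹ ≤ 1 * (sF x * tF x)⁻¹ := by
        gcongr
        exact Real.abs_cos_le_one _
    _ = (sF x * tF x)⁻¹ := one_mul _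

lemma KF_bound {x : E2} (hx : x ≠ 0) (hse : sF x ≤ Real.exp (-1)) :
    |KF x| ≤ (sF x * (sF x * tF x))⁻¹ := by
  have hs := sF_pos hx
  have ht1 := one_le_tF hx hse
  have ht : (0:ℝ) < tF x := lt_of_lt_of_le one_pos ht1
  have hnum : |GF x - CF x * (tF x - 1)| ≤ tF x := by
    have e1 : |GF x| ≤ 1 := Real.abs_sin_le_one _
    have e2 : |CF x * (tF x - 1)| ≤ tF x - 1 := by
      rw [abs_mul, abs_of_nonneg (by linarith : (0:ℝ) ≤ tF x - 1)]
      calc |CF x| * (tF x - 1) ≤ 1 * (tF x - 1) :=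
            mul_le_mul_of_nonneg_right (Real.abs_cos_le_one _) (by linarith)
        _ = tF x - 1 := one_mul _
    calc |GF x - CF x * (tF x - 1)| ≤ |GF x| + |CF x * (tF x - 1)| := abs_sub _ _
      _ ≤ tF x := by linarith
  rw [KF, abs_mul, abs_inv,
    abs_of_pos (by positivity : (0:ℝ) < sF x * tF x * (sF x * tF x))]
  calc |GF x - CF x * (tF x - 1)| * (sF x * tF x * (sF x * tF x))⁻¹
      ≤ tF x * (sF x * tF x * (sF x * tF x))⁻¹ := by gcongr
    _ = (sF x * (sF x * tF x))⁻¹ := by field_simp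

lemma RF_term_bound {x : E2} (hx : x ≠ 0) (hse : sF x ≤ Real.exp (-1))
    {a b : ℝ} (hb : 0 ≤ b) (ha : |a| ≤ sF x) : |b * a * RF x| ≤ b := by
  have hs := sF_pos hx
  have ht1 := one_le_tF hx hse
  have ht : (0:ℝ) < tF x := lt_of_lt_of_le one_pos ht1
  calc |b * a * RF x| = b * (|a| * |RF x|) := by
        rw [abs_mul, abs_mul, abs_of_nonneg hb]; ring
    _ ≤ b * (sF x * (sF x * tF x)⁻¹) := by
        gcongr
        exact RF_bound hx hse
    _ = b * (tF x)⁻¹ := by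
        congr 1
        field_simp
    _ ≤ b * 1 := by
        gcongr
        exact inv_le_one_of_one_le₀ ht1
    _ = b := mul_one b

lemma KF_term_bound {x : E2} (hx : x ≠ 0) (hse : sF x ≤ Real.exp (-1))
    {a b : ℝ} (hb : 0 ≤ b) (ha : |a| ≤ sF x) : |b * a * (uF x * KF x)| ≤ b := by
  have hs := sF_pos hx
  have ht1 := one_le_tF hx hse
  have ht : (0:ℝ) < tF x := lt_of_lt_of_le one_pos ht1
  calc |b * a * (uF x * KF x)| = b * (|a| * (|uF x| * |KF x|)) := by
        rw [abs_mul, abs_mul, abs_mul, abs_of_nonneg hb]; ring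
    _ ≤ b * (sF x * (sF x * (sF x * (sF x * tF x))⁻¹)) := by
        gcongr
        · exact abs_uF_le x
        · exact KF_bound hx hse
    _ = b * (tF x)⁻¹ := by
        congr 1
        field_simp
    _ ≤ b * 1 := by
        gcongr
        exact inv_le_one_of_one_le₀ ht1
    _ = b := mul_one b

lemma sq0_le (x : E2) : |x 0 * x 0| ≤ sF x := by
  rw [abs_of_nonneg (mul_self_nonneg _)]
  simp only [sF]
  nlinarith [mul_self_nonneg (x 1)]

lemma sq1_le (x : E2) : |x 1 * x 1| ≤ sF x := by
  rw [abs_of_nonneg (mul_self_nonneg _)]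
  simp only [sF]
  nlinarith [mul_self_nonneg (x 0)]

lemma cross_le (x : E2) : |x 0 * x 1| ≤ sF x := by
  simp only [sF]
  rw [abs_le]
  constructor <;> nlinarith [sq_nonneg (x 0 + x 1), sq_nonneg (x 0 - x 1)]

lemma S00_bound {x : E2} (hx : x ≠ 0) (hse : sF x ≤ Real.exp (-1)) : |S00 x| ≤ 16 := by
  have h1 : |2 * GF x| ≤ 2 := by
    rw [abs_mul]
    calc |(2:ℝ)| * |GF x| ≤ 2 * 1 := by
          rw [abs_two]
          gcongr
          exact Real.abs_sin_le_one _
      _ = 2 := by norm_num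
  have h2 : |8 * (x 0 * x 0) * RF x| ≤ 8 :=
    RF_term_bound hx hse (by norm_num) (sq0_le x)
  have h3 : |2 * (uF x * RF x)| ≤ 2 := by
    have := RF_term_bound hx hse (b := 2) (a := uF x) (by norm_num) (abs_uF_le x)
    calc |2 * (uF x * RF x)| = |2 * uF x * RF x| := by ring_nf
      _ ≤ 2 := this
  have h4 : |4 * (x 0 * x 0) * (uF x * KF x)| ≤ 4 :=
    KF_term_bound hx hse (by norm_num) (sq0_le x)
  calc |S00 x| ≤ |2 * GF x - 8 * (x 0 * x 0) * RF x - 2 * (uF x * RF x)|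
        + |4 * (x 0 * x 0) * (uF x * KF x)| := abs_sub _ _
    _ ≤ (|2 * GF x - 8 * (x 0 * x 0) * RF x| + |2 * (uF x * RF x)|)
        + |4 * (x 0 * x 0) * (uF x * KF x)| := by gcongr; exact abs_sub _ _
    _ ≤ ((|2 * GF x| + |8 * (x 0 * x 0) * RF x|) + |2 * (uF x * RF x)|)
        + |4 * (x 0 * x 0) * (uF x * KF x)| := by gcongr; exact abs_sub _ _
    _ ≤ ((2 + 8) + 2) + 4 := by gcongr
    _ = 16 := by norm_num

lemma S11_bound {x : E2} (hx : x ≠ 0) (hse : sF x ≤ Real.exp (-1)) : |S11 x| ≤ 16 := by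
  have h1 : |2 * GF x| ≤ 2 := by
    rw [abs_mul]
    calc |(2:ℝ)| * |GF x| ≤ 2 * 1 := by
          rw [abs_two]
          gcongr
          exact Real.abs_sin_le_one _
      _ = 2 := by norm_num
  have h2 : |8 * (x 1 * x 1) * RF x| ≤ 8 :=
    RF_term_bound hx hse (by norm_num) (sq1_le x)
  have h3 : |2 * (uF x * RF x)| ≤ 2 := by
    have := RF_term_bound hx hse (b := 2) (a := uF x) (by norm_num) (abs_uF_le x)
    calc |2 * (uF x * RF x)| = |2 * uF x * RF x| := by ring_nf
      _ ≤ 2 := this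
  have h4 : |4 * (x 1 * x 1) * (uF x * KF x)| ≤ 4 :=
    KF_term_bound hx hse (by norm_num) (sq1_le x)
  calc |S11 x| = |(-(2 * GF x) - 2 * (uF x * RF x) + 8 * (x 1 * x 1) * RF x)
        - 4 * (x 1 * x 1) * (uF x * KF x)| := by rw [S11]
    _ ≤ |(-(2 * GF x) - 2 * (uF x * RF x)) + 8 * (x 1 * x 1) * RF x|
        + |4 * (x 1 * x 1) * (uF x * KF x)| := abs_sub _ _
    _ ≤ (|(-(2 * GF x)) - 2 * (uF x * RF x)| + |8 * (x 1 * x 1) * RF x|)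
        + |4 * (x 1 * x 1) * (uF x * KF x)| := by gcongr; exact abs_add_le _ _
    _ ≤ ((|(-(2 * GF x))| + |2 * (uF x * RF x)|) + |8 * (x 1 * x 1) * RF x|)
        + |4 * (x 1 * x 1) * (uF x * KF x)| := by gcongr; exact abs_sub _ _
    _ = ((|2 * GF x| + |2 * (uF x * RF x)|) + |8 * (x 1 * x 1) * RF x|)
        + |4 * (x 1 * x 1) * (uF x * KF x)| := by rw [abs_neg]
    _ ≤ ((2 + 2) + 8) + 4 := by gcongr
    _ = 16 := by norm_num

lemma SX_bound {x : E2} (hx : x ≠ 0) (hse : sF x ≤ Real.exp (-1)) : |SX x| ≤ 16 := by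
  have h4 : |4 * (x 0 * x 1) * (uF x * KF x)| ≤ 4 :=
    KF_term_bound hx hse (by norm_num) (cross_le x)
  calc |SX x| = |4 * (x 0 * x 1) * (uF x * KF x)| := by rw [SX, abs_neg]
    _ ≤ 4 := h4
    _ ≤ 16 := by norm_num

/- ## Laplacian -/

lemma lap_eq {x : E2} (hx : x ≠ 0) (h1 : sF x < 1) :
    lap phiFun x = -(12 * (uF x * RF x)) - 4 * sF x * (uF x * KF x) := by
  unfold lap
  rw [Fin.sum_univ_two, spd00_eq hx h1, spd11_eq hx h1]
  simp only [S00, S11, uF, sF]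
  ring

lemma lap_bound {x : E2} (hx : x ≠ 0) (hse : sF x ≤ Real.exp (-1)) :
    |lap phiFun x| ≤ 16 * (tF x)⁻¹ := by
  have hs := sF_pos hx
  have ht1 := one_le_tF hx hse
  have ht : (0:ℝ) < tF x := lt_of_lt_of_le one_pos ht1
  rw [lap_eq hx (sF_lt_one hse)]
  have h1 : |12 * (uF x * RF x)| ≤ 12 * (tF x)⁻¹ := by
    calc |12 * (uF x * RF x)| = 12 * (|uF x| * |RF x|) := by
          rw [abs_mul, abs_mul]; norm_num
      _ ≤ 12 * (sF x * (sF x * tF x)⁻¹) := by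
          gcongr
          · exact abs_uF_le x
          · exact RF_bound hx hse
      _ = 12 * (tF x)⁻¹ := by congr 1; field_simp
  have h2 : |4 * sF x * (uF x * KF x)| ≤ 4 * (tF x)⁻¹ := by
    calc |4 * sF x * (uF x * KF x)| = 4 * (sF x * (|uF x| * |KF x|)) := by
          rw [abs_mul, abs_mul, abs_mul, abs_of_pos hs]; norm_num; ring
      _ ≤ 4 * (sF x * (sF x * (sF x * (sF x * tF x))⁻¹)) := by
          gcongr
          · exact abs_uF_le x
          · exact KF_bound hx hse
      _ = 4 * (tF x)⁻¹ := by congr 1; field_simp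
  calc |-(12 * (uF x * RF x)) - 4 * sF x * (uF x * KF x)|
      ≤ |(-(12 * (uF x * RF x)))| + |4 * sF x * (uF x * KF x)| := abs_sub _ _
    _ = |12 * (uF x * RF x)| + |4 * sF x * (uF x * KF x)| := by rw [abs_neg]
    _ ≤ 12 * (tF x)⁻¹ + 4 * (tF x)⁻¹ := by gcongr
    _ = 16 * (tF x)⁻¹ := by ring

lemma tendsto_tF : Tendsto tF (𝓝[≠] (0:E2)) atTop := by
  have hs : Tendsto sF (𝓝[≠] (0:E2)) (𝓝[>] 0) := by
    rw [tendsto_nhdsWithin_iff]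
    constructor
    · have : Tendsto sF (𝓝 (0:E2)) (𝓝 (sF 0)) := sF_cont.tendsto 0
      have h0 : sF (0:E2) = 0 := by simp [sF]
      rw [h0] at this
      exact this.mono_left nhdsWithin_le_nhds
    · exact eventually_mem_nhdsWithin.mono (fun y hy => sF_pos hy)
  have hlog : Tendsto (fun x => Real.log (sF x)) (𝓝[≠] (0:E2)) atBot :=
    Real.tendsto_log_nhdsGT_zero.comp hs
  have : Tendsto (fun x => -Real.log (sF x)) (𝓝[≠] (0:E2)) atTop :=
    tendsto_neg_atBot_atTop.comp hlog
  exact this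

lemma lap_tendsto : Tendsto (fun x => lap phiFun x) (𝓝[≠] (0:E2)) (𝓝 0) := by
  apply squeeze_zero_norm'
  · have hev : ∀ᶠ x in 𝓝[≠] (0:E2), sF x ≤ Real.exp (-1) := by
      have : Tendsto sF (𝓝[≠] (0:E2)) (𝓝 0) := by
        have : Tendsto sF (𝓝 (0:E2)) (𝓝 (sF 0)) := sF_cont.tendsto 0
        have h0 : sF (0:E2) = 0 := by simp [sF]
        rw [h0] at this
        exact this.mono_left nhdsWithin_le_nhds
      exact this.eventually_le_const (by positivity)
    filter_upwards [hev, eventually_mem_nhdsWithin] with x hse hx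
    exact lap_bound hx hse
  · have := tendsto_tF.inv_tendsto_atTop
    have h2 := this.const_mul (16:ℝ)
    simpa using h2

/- ## Norm squared -/

lemma normsq_eq (x : E2) : ‖x‖^2 = sF x := by
  rw [EuclideanSpace.norm_eq, Real.sq_sqrt (by positivity)]
  simp only [Real.norm_eq_abs, sF, Fin.sum_univ_two, sq_abs]
  ring

/- ## Part 3 : not twice differentiable -/

lemma sF_nonneg (x : E2) : 0 ≤ sF x := by
  simp only [sF]
  nlinarith [mul_self_nonneg (x 0), mul_self_nonneg (x 1)]

lemma phiFun_zero : phiFun 0 = 0 := by simp [phiFun]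

lemma phiFun_abs_le (y : E2) : |phiFun y| ≤ ‖y‖^2 := by
  have h : phiFun y = uF y * GF y := by rw [phiFun_eq]
  rw [h, normsq_eq]
  calc |uF y * GF y| = |uF y| * |GF y| := abs_mul _ _
    _ ≤ sF y * 1 :=
        mul_le_mul (abs_uF_le y) (Real.abs_sin_le_one _) (abs_nonneg _) (sF_nonneg y)
    _ = sF y := mul_one _

lemma hasFDerivAt_phi0 : HasFDerivAt phiFun (0 : E2 →L[ℝ] ℝ) 0 := by
  rw [hasFDerivAt_iff_isLittleO_nhds_zero]
  simp only [zero_add, ContinuousLinearMap.zero_apply, sub_zero, phiFun_zero]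
  rw [Asymptotics.isLittleO_iff]
  intro c hc
  have hb : ∀ᶠ y : E2 in 𝓝 0, ‖y‖ < c := by
    filter_upwards [Metric.ball_mem_nhds (0:E2) hc] with y hy
    simpa [dist_eq_norm] using hy
  filter_upwards [hb] with y hy
  have h1 := phiFun_abs_le y
  rw [Real.norm_eq_abs]
  calc |phiFun y| ≤ ‖y‖^2 := h1
    _ = ‖y‖ * ‖y‖ := sq ‖y‖ ▸ (sq ‖y‖).symm ▸ (by ring)
    _ ≤ c * ‖y‖ := mul_le_mul_of_nonneg_right hy.le (norm_nonneg y)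

lemma fderiv_phi0 : fderiv ℝ phiFun 0 = 0 := hasFDerivAt_phi0.fderiv

noncomputable def rr (θ : ℝ) : ℝ := Real.exp (-Real.exp θ / 2)

noncomputable def seqF (θ : ℝ) : E2 := EuclideanSpace.single 0 (rr θ)

lemma rr_pos (θ : ℝ) : 0 < rr θ := Real.exp_pos _

lemma rr_sq (θ : ℝ) : rr θ * rr θ = Real.exp (-Real.exp θ) := by
  rw [rr, ← Real.exp_add]
  ring_nf

lemma seqF_apply0 (θ : ℝ) : (seqF θ) 0 = rr θ := by
  simp [seqF, EuclideanSpace.single_apply]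

lemma seqF_apply1 (θ : ℝ) : (seqF θ) 1 = 0 := by
  simp [seqF, EuclideanSpace.single_apply]

lemma seqF_ne (θ : ℝ) : seqF θ ≠ 0 := by
  intro h
  have h0 := seqF_apply0 θ
  rw [h] at h0
  have : ((0:E2) 0 : ℝ) = 0 := rfl
  rw [this] at h0
  exact (rr_pos θ).ne' h0.symm

lemma phiFun_seqF (θ : ℝ) : phiFun (seqF θ) = (rr θ * rr θ) * Real.sin θ := by
  rw [show phiFun (seqF θ) = ((seqF θ 0)^2 - (seqF θ 1)^2) *
      Real.sin (Real.log (-Real.log ((seqF θ 0)^2 + (seqF θ 1)^2))) from by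
    simp [phiFun, if_neg (seqF_ne θ)]]
  rw [seqF_apply0, seqF_apply1]
  rw [show (rr θ)^2 = rr θ * rr θ from sq (rr θ), rr_sq]
  rw [show (0:ℝ)^2 = 0 by norm_num, sub_zero, add_zero, Real.log_exp, neg_neg, Real.log_exp]

lemma normsq_seqF (θ : ℝ) : ‖seqF θ‖^2 = rr θ * rr θ := by
  rw [normsq_eq]
  simp only [sF, seqF_apply0, seqF_apply1]
  ring

lemma single_smul' (h : ℝ) :
    (EuclideanSpace.single (0:Fin 2) h : E2) = h • EuclideanSpace.single (0:Fin 2) (1:ℝ) := by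
  ext j
  fin_cases j <;> simp [EuclideanSpace.single_apply]

lemma bilin_seqF (B : E2 →L[ℝ] E2 →L[ℝ] ℝ) (θ : ℝ) :
    B (seqF θ) (seqF θ) = (rr θ * rr θ) *
      B (EuclideanSpace.single 0 1) (EuclideanSpace.single 0 1) := by
  rw [seqF, single_smul']
  simp only [map_smul, ContinuousLinearMap.smul_apply, smul_eq_mul]
  ring

lemma seqF_tendsto (a : ℝ) :
    Tendsto (fun k : ℕ => seqF (a + k * (2 * Real.pi))) atTop (𝓝[≠] (0:E2)) := by
  have h1 : Tendsto (fun k : ℕ => a + (k:ℝ) * (2 * Real.pi)) atTop atTop := by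
    apply tendsto_atTop_add_const_left
    exact Tendsto.atTop_mul_const (by positivity) tendsto_natCast_atTop_atTop
  have h2 : Tendsto (fun k : ℕ => rr (a + k * (2 * Real.pi))) atTop (𝓝 0) := by
    apply Real.tendsto_exp_atBot.comp
    apply Tendsto.comp (g := fun y : ℝ => -y / 2) _ (Real.tendsto_exp_atTop.comp h1)
    have : Tendsto (fun y : ℝ => -y / 2) atTop atBot := by
      apply Tendsto.atBot_div_const (by norm_num)
      exact tendsto_neg_atTop_atBot
    exact this
  rw [tendsto_nhdsWithin_iff]
  constructor
  · rw [tendsto_zero_iff_norm_tendsto_zero]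
    have : ∀ k : ℕ, ‖seqF (a + k * (2 * Real.pi))‖ = |rr (a + k * (2 * Real.pi))| := by
      intro k
      rw [seqF, EuclideanSpace.norm_single, Real.norm_eq_abs]
    simp only [this]
    simpa using h2.abs
  · exact Eventually.of_forall (fun k => seqF_ne _)

lemma not_twiceDiff : ¬ TwiceDiffAt phiFun 0 := by
  rintro ⟨-, -, h3⟩
  set B := fderiv ℝ (fderiv ℝ phiFun) 0 with hB
  set c := B (EuclideanSpace.single 0 1) (EuclideanSpace.single 0 1) with hc
  simp only [sub_zero, fderiv_phi0, phiFun_zero, ContinuousLinearMap.zero_apply] at h3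
  have key : ∀ θ : ℝ,
      (phiFun (seqF θ) - 1/2 * (B (seqF θ)) (seqF θ)) / ‖seqF θ‖^2
        = Real.sin θ - 1/2 * c := by
    intro θ
    rw [phiFun_seqF, bilin_seqF, normsq_seqF, ← hc]
    have hne : rr θ * rr θ ≠ 0 := mul_ne_zero (rr_pos θ).ne' (rr_pos θ).ne'
    have hr : rr θ ≠ 0 := (rr_pos θ).ne'
    field_simp
  have lim : ∀ a : ℝ, Tendsto (fun k : ℕ => Real.sin (a + k * (2 * Real.pi)) - 1/2 * c)
      atTop (𝓝 0) := by
    intro a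
    have h := h3.comp (seqF_tendsto a)
    simp only [Function.comp_def] at h
    have heq : (fun k : ℕ => (phiFun (seqF (a + k * (2 * Real.pi)))
        - 1/2 * (B (seqF (a + k * (2 * Real.pi)))) (seqF (a + k * (2 * Real.pi))))
          / ‖seqF (a + k * (2 * Real.pi))‖^2)
        = fun k : ℕ => Real.sin (a + k * (2 * Real.pi)) - 1/2 * c := by
      funext k
      exact key _
    rw [← heq]
    exact h
  have lim1 := lim (Real.pi/2)
  have lim2 := lim (Real.pi/2 + Real.pi)
  have e1 : ∀ k : ℕ, Real.sin (Real.pi/2 + k * (2 * Real.pi)) - 1/2 * c = 1 - 1/2 * c := by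
    intro k
    rw [Real.sin_add_nat_mul_two_pi, Real.sin_pi_div_two]
  have e2 : ∀ k : ℕ, Real.sin (Real.pi/2 + Real.pi + k * (2 * Real.pi)) - 1/2 * c
      = -1 - 1/2 * c := by
    intro k
    rw [Real.sin_add_nat_mul_two_pi, Real.sin_add_pi, Real.sin_pi_div_two]
  rw [funext e1] at lim1
  rw [funext e2] at lim2
  have h1 : (1 : ℝ) - 1/2 * c = 0 := tendsto_nhds_unique tendsto_const_nhds lim1
  have h2 : (-1 : ℝ) - 1/2 * c = 0 := tendsto_nhds_unique tendsto_const_nhds lim2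
  linarith

theorem stmt4 :
    (∃ L : ℝ, Tendsto (fun x => lap phiFun x) (𝓝[≠] (0 : EuclideanSpace ℝ (Fin 2))) (𝓝 L)) ∧
    (∃ C : ℝ, ∀ x : EuclideanSpace ℝ (Fin 2), x ≠ 0 → ‖x‖^2 ≤ 1/4 →
      ∀ i j : Fin 2, |spd i j phiFun x| ≤ C) ∧
    ¬ TwiceDiffAt phiFun 0 := by
  refine ⟨⟨0, lap_tendsto⟩, ⟨16, ?_⟩, not_twiceDiff⟩
  intro x hx hn i j
  have hse : sF x ≤ Real.exp (-1) := by
    have h4 : Real.exp 1 < 4 := lt_trans Real.exp_one_lt_d9 (by norm_num)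
    have hinv : (4:ℝ)⁻¹ ≤ (Real.exp 1)⁻¹ := by
      rw [inv_le_inv₀ (by norm_num) (Real.exp_pos 1)]
      exact h4.le
    calc sF x = ‖x‖^2 := (normsq_eq x).symm
      _ ≤ 1/4 := hn
      _ = (4:ℝ)⁻¹ := by norm_num
      _ ≤ (Real.exp 1)⁻¹ := hinv
      _ = Real.exp (-1) := (Real.exp_neg 1).symm
  have h1 := sF_lt_one hse
  fin_cases i <;> fin_cases j
  · show |spd 0 0 phiFun x| ≤ 16
    rw [spd00_eq hx h1]; exact S00_bound hx hse
  · show |spd 0 1 phiFun x| ≤ 16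
    rw [spd01_eq hx h1]; exact SX_bound hx hse
  · show |spd 1 0 phiFun x| ≤ 16
    rw [spd10_eq hx h1]; exact SX_bound hx hse
  · show |spd 1 1 phiFun x| ≤ 16
    rw [spd11_eq hx h1]; exact S11_bound hx hse
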